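/- Let Ω ⊆ ℝ² be open, connected, and closed under positive scaling, let q : Ω → ℝ be smooth and positively homogeneous of degree 1 (q(τx,τy) = τ q(x,y) for τ > 0), with q_xy ≠ 0 everywhere on Ω. Suppose Sˣ, Sʸ : Ω → ℝ are smooth and satisfy on Ω: (E1) ∂_y Sˣ + ∂_x Sʸ = 4 q_x q_y; (E2) ∂_x Sˣ = 2 q_x²; (E3) ∂_y Sʸ = 2 q_y². Then there exist constants Cˣ, Cʸ ∈ ℝ such that x(Sˣ − Cˣ) + y(Sʸ − Cʸ) = 2 q² on Ω, and moreover Sˣ − Cˣ and Sʸ − Cʸ are positively homogeneous of degree 1, i.e. x ∂_x(Sˣ − Cˣ) + y ∂_y(Sˣ − Cˣ) = Sˣ − Cˣ and x ∂_x(Sʸ − Cʸ) + y ∂_y(Sʸ − Cʸ) = Sʸ − Cʸ on Ω. -/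

import Mathlib

open Real Set

/-- Partial derivative in the first variable. -/
noncomputable def px (f : ℝ × ℝ → ℝ) : ℝ × ℝ → ℝ :=
  fun p => deriv (fun t => f (t, p.2)) p.1

/-- Partial derivative in the second variable. -/
noncomputable def py (f : ℝ × ℝ → ℝ) : ℝ × ℝ → ℝ :=
  fun p => deriv (fun t => f (p.1, t)) p.2

lemma hasDerivAt_slice1 {f : ℝ × ℝ → ℝ} {p : ℝ × ℝ} (hf : DifferentiableAt ℝ f p) :
    HasDerivAt (fun t => f (t, p.2)) (fderiv ℝ f p (1, 0)) p.1 := by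
  have h1 : HasDerivAt (fun t : ℝ => ((t, p.2) : ℝ × ℝ)) (1, 0) p.1 :=
    (hasDerivAt_id _).prodMk (hasDerivAt_const _ _)
  exact hf.hasFDerivAt.comp_hasDerivAt p.1 h1

lemma hasDerivAt_slice2 {f : ℝ × ℝ → ℝ} {p : ℝ × ℝ} (hf : DifferentiableAt ℝ f p) :
    HasDerivAt (fun t => f (p.1, t)) (fderiv ℝ f p (0, 1)) p.2 := by
  have h1 : HasDerivAt (fun t : ℝ => ((p.1, t) : ℝ × ℝ)) (0, 1) p.2 :=
    (hasDerivAt_const _ _).prodMk (hasDerivAt_id _)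
  exact hf.hasFDerivAt.comp_hasDerivAt p.2 h1

lemma px_eq {f : ℝ × ℝ → ℝ} {p : ℝ × ℝ} (hf : DifferentiableAt ℝ f p) :
    px f p = fderiv ℝ f p (1, 0) := (hasDerivAt_slice1 hf).deriv

lemma py_eq {f : ℝ × ℝ → ℝ} {p : ℝ × ℝ} (hf : DifferentiableAt ℝ f p) :
    py f p = fderiv ℝ f p (0, 1) := (hasDerivAt_slice2 hf).deriv

lemma hasDerivAt_px {f : ℝ × ℝ → ℝ} {p : ℝ × ℝ} (hf : DifferentiableAt ℝ f p) :
    HasDerivAt (fun t => f (t, p.2)) (px f p) p.1 := by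
  rw [px_eq hf]; exact hasDerivAt_slice1 hf

lemma hasDerivAt_py {f : ℝ × ℝ → ℝ} {p : ℝ × ℝ} (hf : DifferentiableAt ℝ f p) :
    HasDerivAt (fun t => f (p.1, t)) (py f p) p.2 := by
  rw [py_eq hf]; exact hasDerivAt_slice2 hf

lemma fderiv_apply_eq {f : ℝ × ℝ → ℝ} {p : ℝ × ℝ} (hf : DifferentiableAt ℝ f p) (v : ℝ × ℝ) :
    fderiv ℝ f p v = v.1 * px f p + v.2 * py f p := by
  have hv : v = v.1 • ((1 : ℝ), (0 : ℝ)) + v.2 • ((0 : ℝ), (1 : ℝ)) := by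
    ext <;> simp
  rw [hv, map_add, map_smul, map_smul, ← px_eq hf, ← py_eq hf]
  simp [smul_eq_mul]

lemma px_congr_nhds {f g : ℝ × ℝ → ℝ} {p : ℝ × ℝ} (h : f =ᶠ[nhds p] g) : px f p = px g p := by
  apply Filter.EventuallyEq.deriv_eq
  exact h.comp_tendsto (Continuous.tendsto' (by fun_prop) p.1 p rfl)

lemma py_congr_nhds {f g : ℝ × ℝ → ℝ} {p : ℝ × ℝ} (h : f =ᶠ[nhds p] g) : py f p = py g p := by
  apply Filter.EventuallyEq.deriv_eq
  exact h.comp_tendsto (Continuous.tendsto' (by fun_prop) p.2 p rfl)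

lemma px_congr_on {Ω : Set (ℝ × ℝ)} {f g : ℝ × ℝ → ℝ} {p : ℝ × ℝ} (hΩ : IsOpen Ω)
    (h : ∀ z ∈ Ω, f z = g z) (hp : p ∈ Ω) : px f p = px g p :=
  px_congr_nhds (Filter.eventually_iff_exists_mem.2 ⟨Ω, hΩ.mem_nhds hp, h⟩)

lemma py_congr_on {Ω : Set (ℝ × ℝ)} {f g : ℝ × ℝ → ℝ} {p : ℝ × ℝ} (hΩ : IsOpen Ω)
    (h : ∀ z ∈ Ω, f z = g z) (hp : p ∈ Ω) : py f p = py g p :=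
  py_congr_nhds (Filter.eventually_iff_exists_mem.2 ⟨Ω, hΩ.mem_nhds hp, h⟩)

lemma contDiffOn_px {Ω : Set (ℝ × ℝ)} {f : ℝ × ℝ → ℝ} (hΩ : IsOpen Ω)
    (hf : ContDiffOn ℝ (⊤ : ℕ∞) f Ω) : ContDiffOn ℝ (⊤ : ℕ∞) (px f) Ω := by
  have h1 : ContDiffOn ℝ (⊤ : ℕ∞) (fderiv ℝ f) Ω :=
    hf.fderiv_of_isOpen hΩ (by exact_mod_cast le_top)
  have h2 : ContDiffOn ℝ (⊤ : ℕ∞) (fun z => fderiv ℝ f z (1, 0)) Ω :=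
    h1.clm_apply contDiffOn_const
  exact h2.congr fun z hz =>
    px_eq ((hf.differentiableOn (by simp)).differentiableAt (hΩ.mem_nhds hz))

lemma contDiffOn_py {Ω : Set (ℝ × ℝ)} {f : ℝ × ℝ → ℝ} (hΩ : IsOpen Ω)
    (hf : ContDiffOn ℝ (⊤ : ℕ∞) f Ω) : ContDiffOn ℝ (⊤ : ℕ∞) (py f) Ω := by
  have h1 : ContDiffOn ℝ (⊤ : ℕ∞) (fderiv ℝ f) Ω :=
    hf.fderiv_of_isOpen hΩ (by exact_mod_cast le_top)
  have h2 : ContDiffOn ℝ (⊤ : ℕ∞) (fun z => fderiv ℝ f z (0, 1)) Ω :=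
    h1.clm_apply contDiffOn_const
  exact h2.congr fun z hz =>
    py_eq ((hf.differentiableOn (by simp)).differentiableAt (hΩ.mem_nhds hz))

lemma diffAt_of_contDiffOn {Ω : Set (ℝ × ℝ)} {f : ℝ × ℝ → ℝ} (hΩ : IsOpen Ω)
    (hf : ContDiffOn ℝ (⊤ : ℕ∞) f Ω) {p : ℝ × ℝ} (hp : p ∈ Ω) : DifferentiableAt ℝ f p :=
  (hf.differentiableOn (by simp)).differentiableAt (hΩ.mem_nhds hp)

lemma clairaut {Ω : Set (ℝ × ℝ)} {f : ℝ × ℝ → ℝ} (hΩ : IsOpen Ω)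
    (hf : ContDiffOn ℝ (⊤ : ℕ∞) f Ω) {p : ℝ × ℝ} (hp : p ∈ Ω) :
    px (py f) p = py (px f) p := by
  have hct : ContDiffAt ℝ (⊤ : ℕ∞) f p := hf.contDiffAt (hΩ.mem_nhds hp)
  have hsymm : IsSymmSndFDerivAt ℝ f p := hct.isSymmSndFDerivAt (by
    rw [minSmoothness_of_isRCLikeNormedField, show (2 : WithTop ℕ∞) = ((2:ℕ∞) : WithTop ℕ∞) from rfl, WithTop.coe_le_coe]
    exact le_top)
  have hd : DifferentiableAt ℝ (fderiv ℝ f) p :=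
    (hct.fderiv_right (m := (⊤ : ℕ∞)) (by exact_mod_cast le_top)).differentiableAt
      (by simp)
  have heq1 : px (py f) p = px (fun z => fderiv ℝ f z (0, 1)) p := by
    apply px_congr_nhds
    filter_upwards [hΩ.mem_nhds hp] with z hz
    exact py_eq (diffAt_of_contDiffOn hΩ hf hz)
  have heq2 : py (px f) p = py (fun z => fderiv ℝ f z (1, 0)) p := by
    apply py_congr_nhds
    filter_upwards [hΩ.mem_nhds hp] with z hz
    exact px_eq (diffAt_of_contDiffOn hΩ hf hz)
  have hda : ∀ v : ℝ × ℝ, DifferentiableAt ℝ (fun z => fderiv ℝ f z v) p := fun v =>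
    (ContinuousLinearMap.apply ℝ ℝ v).differentiableAt.comp p hd
  have hf1 : ∀ v w : ℝ × ℝ, fderiv ℝ (fun z => fderiv ℝ f z v) p w
      = fderiv ℝ (fderiv ℝ f) p w v := by
    intro v w
    have := ((ContinuousLinearMap.apply ℝ ℝ v).hasFDerivAt.comp p hd.hasFDerivAt).fderiv
    rw [show (fun z => fderiv ℝ f z v) = (ContinuousLinearMap.apply ℝ ℝ v) ∘ (fderiv ℝ f) from rfl,
      this]
    rfl
  rw [heq1, heq2, px_eq (hda (0,1)), py_eq (hda (1,0)), hf1, hf1]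
  exact hsymm (1, 0) (0, 1)

lemma const_on {Ω : Set (ℝ × ℝ)} (hΩ : IsOpen Ω) (hconn : IsPreconnected Ω) {G : ℝ × ℝ → ℝ}
    (hG : DifferentiableOn ℝ G Ω) (h0 : ∀ p ∈ Ω, fderiv ℝ G p = 0) :
    ∀ p ∈ Ω, ∀ p' ∈ Ω, G p = G p' := by
  have key : ∀ p ∈ Ω, ∀ᶠ z in nhds p, G z = G p := by
    intro p hp
    obtain ⟨ε, hε, hball⟩ := Metric.isOpen_iff.1 hΩ p hp
    filter_upwards [Metric.ball_mem_nhds p hε] with z hz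
    exact (convex_ball p ε).is_const_of_fderivWithin_eq_zero (hG.mono hball)
      (fun y hy => by rw [fderivWithin_of_isOpen Metric.isOpen_ball hy]; exact h0 y (hball hy))
      hz (Metric.mem_ball_self hε)
  intro p hp p' hp'
  by_contra hne
  set U : Set (ℝ × ℝ) := {z | G z = G p ∧ ∀ᶠ w in nhds z, G w = G z}
  set V : Set (ℝ × ℝ) := {z | G z ≠ G p ∧ ∀ᶠ w in nhds z, G w = G z}
  have hUo : IsOpen U := by
    rw [isOpen_iff_mem_nhds]
    rintro z ⟨hz1, hz2⟩
    filter_upwards [hz2, eventually_eventually_nhds.2 hz2] with w hw1 hw2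
    exact ⟨hw1.trans hz1, by filter_upwards [hw2] with a ha using ha.trans hw1.symm⟩
  have hVo : IsOpen V := by
    rw [isOpen_iff_mem_nhds]
    rintro z ⟨hz1, hz2⟩
    filter_upwards [hz2, eventually_eventually_nhds.2 hz2] with w hw1 hw2
    exact ⟨hw1 ▸ hz1, by filter_upwards [hw2] with a ha using ha.trans hw1.symm⟩
  have hdis : Disjoint U V := by
    rw [Set.disjoint_left]; rintro z ⟨h1, _⟩ ⟨h2, _⟩; exact h2 h1
  have hcov : Ω ⊆ U ∪ V := by
    intro z hz
    by_cases h : G z = G p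
    · exact Or.inl ⟨h, key z hz⟩
    · exact Or.inr ⟨h, key z hz⟩
  have := hconn.subset_left_of_subset_union hUo hVo hdis hcov ⟨p, hp, rfl, key p hp⟩
  exact hne (this hp').1.symm

lemma euler_of_hom {Ω : Set (ℝ × ℝ)} (hΩ : IsOpen Ω) {f : ℝ × ℝ → ℝ} (d : ℕ)
    (hf : ∀ z ∈ Ω, DifferentiableAt ℝ f z)
    (hhom : ∀ p ∈ Ω, ∀ τ : ℝ, 0 < τ → f (τ * p.1, τ * p.2) = τ ^ d * f p) :
    ∀ p ∈ Ω, p.1 * px f p + p.2 * py f p = d * f p := by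
  intro p hp
  have h1 : HasDerivAt (fun τ : ℝ => ((τ * p.1, τ * p.2) : ℝ × ℝ)) (p.1, p.2) 1 := by
    have := ((hasDerivAt_id (1 : ℝ)).mul_const p.1).prodMk ((hasDerivAt_id (1 : ℝ)).mul_const p.2)
    simpa using this
  have hfp : DifferentiableAt ℝ f ((1 : ℝ) * p.1, (1 : ℝ) * p.2) := by
    simpa using hf p hp
  have hd : HasDerivAt (fun τ : ℝ => f (τ * p.1, τ * p.2)) (fderiv ℝ f p (p.1, p.2)) 1 := by
    have := hfp.hasFDerivAt.comp_hasDerivAt 1 h1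
    simpa [Function.comp_def] using this
  have h2 : HasDerivAt (fun τ : ℝ => τ ^ d * f p) (d * f p) 1 := by
    simpa using (hasDerivAt_pow d (1 : ℝ)).mul_const (f p)
  have heq : (fun τ : ℝ => f (τ * p.1, τ * p.2)) =ᶠ[nhds 1] fun τ => τ ^ d * f p := by
    filter_upwards [Ioi_mem_nhds one_pos] with τ hτ
    exact hhom p hp τ hτ
  have := (hd.congr_of_eventuallyEq heq.symm).unique h2
  rw [← this, fderiv_apply_eq (hf p hp)]

lemma hom_px {Ω : Set (ℝ × ℝ)} (hΩ : IsOpen Ω) {q : ℝ × ℝ → ℝ}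
    (hq : ∀ z ∈ Ω, DifferentiableAt ℝ q z)
    (hhom : ∀ p ∈ Ω, ∀ τ : ℝ, 0 < τ → q (τ * p.1, τ * p.2) = τ * q p) :
    ∀ p ∈ Ω, ∀ τ : ℝ, 0 < τ → px q (τ * p.1, τ * p.2) = px q p := by
  intro p hp τ hτ
  have hτ0 : τ ≠ 0 := ne_of_gt hτ
  have h1 : HasDerivAt (fun t : ℝ => t / τ) (1 / τ) (τ * p.1) := (hasDerivAt_id _).div_const τ
  have h2 : HasDerivAt (fun s => q (s, p.2)) (px q p) ((τ * p.1) / τ) := by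
    rw [mul_div_cancel_left₀ _ hτ0]; exact hasDerivAt_px (hq p hp)
  have h3 : HasDerivAt (fun t : ℝ => τ * q (t / τ, p.2)) (px q p) (τ * p.1) := by
    have := (h2.comp (τ * p.1) h1).const_mul τ
    exact this.congr_deriv (by field_simp)
  have h4 : HasDerivAt (fun t : ℝ => q (t, τ * p.2)) (px q p) (τ * p.1) := by
    apply h3.congr_of_eventuallyEq
    have hopen : IsOpen {t : ℝ | (t / τ, p.2) ∈ Ω} := hΩ.preimage (by fun_prop)
    have hm : (τ * p.1) ∈ {t : ℝ | (t / τ, p.2) ∈ Ω} := by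
      simp only [Set.mem_setOf_eq, mul_div_cancel_left₀ _ hτ0]
      exact hp
    filter_upwards [hopen.mem_nhds hm] with t ht
    have h5 := hhom (t / τ, p.2) ht τ hτ
    simp only at h5
    rw [show τ * (t / τ) = t by field_simp] at h5
    exact h5
  exact h4.deriv

lemma hom_py {Ω : Set (ℝ × ℝ)} (hΩ : IsOpen Ω) {q : ℝ × ℝ → ℝ}
    (hq : ∀ z ∈ Ω, DifferentiableAt ℝ q z)
    (hhom : ∀ p ∈ Ω, ∀ τ : ℝ, 0 < τ → q (τ * p.1, τ * p.2) = τ * q p) :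
    ∀ p ∈ Ω, ∀ τ : ℝ, 0 < τ → py q (τ * p.1, τ * p.2) = py q p := by
  intro p hp τ hτ
  have hτ0 : τ ≠ 0 := ne_of_gt hτ
  have h1 : HasDerivAt (fun t : ℝ => t / τ) (1 / τ) (τ * p.2) := (hasDerivAt_id _).div_const τ
  have h2 : HasDerivAt (fun s => q (p.1, s)) (py q p) ((τ * p.2) / τ) := by
    rw [mul_div_cancel_left₀ _ hτ0]; exact hasDerivAt_py (hq p hp)
  have h3 : HasDerivAt (fun t : ℝ => τ * q (p.1, t / τ)) (py q p) (τ * p.2) := by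
    have := (h2.comp (τ * p.2) h1).const_mul τ
    exact this.congr_deriv (by field_simp)
  have h4 : HasDerivAt (fun t : ℝ => q (τ * p.1, t)) (py q p) (τ * p.2) := by
    apply h3.congr_of_eventuallyEq
    have hopen : IsOpen {t : ℝ | (p.1, t / τ) ∈ Ω} := hΩ.preimage (by fun_prop)
    have hm : (τ * p.2) ∈ {t : ℝ | (p.1, t / τ) ∈ Ω} := by
      simp only [Set.mem_setOf_eq, mul_div_cancel_left₀ _ hτ0]
      exact hp
    filter_upwards [hopen.mem_nhds hm] with t ht
    have h5 := hhom (p.1, t / τ) ht τ hτ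
    simp only at h5
    rw [show τ * (t / τ) = t by field_simp] at h5
    exact h5
  exact h4.deriv

lemma fderiv_eq_zero_of_px_py {G : ℝ × ℝ → ℝ} {p : ℝ × ℝ} (hG : DifferentiableAt ℝ G p)
    (h1 : px G p = 0) (h2 : py G p = 0) : fderiv ℝ G p = 0 := by
  refine ContinuousLinearMap.ext fun v => ?_
  rw [fderiv_apply_eq hG, h1, h2]
  simp
/-- for `q` homogeneous of degree 1 with `q_xy ≠ 0`, resolvents satisfying
(E1)–(E3) satisfy `x(Sˣ − Cˣ) + y(Sʸ − Cʸ) = 2q²` for some constants, and the shifted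
resolvents are homogeneous of degree 1. -/
theorem resolvents_homogeneous
    (Ω : Set (ℝ × ℝ)) (hΩ : IsOpen Ω) (hconn : IsConnected Ω)
    (hscale : ∀ p ∈ Ω, ∀ τ : ℝ, 0 < τ → (τ * p.1, τ * p.2) ∈ Ω)
    (q Sx Sy : ℝ × ℝ → ℝ)
    (hq : ContDiffOn ℝ (⊤ : ℕ∞) q Ω)
    (hhom : ∀ p ∈ Ω, ∀ τ : ℝ, 0 < τ → q (τ * p.1, τ * p.2) = τ * q p)
    (hqxy : ∀ p ∈ Ω, py (px q) p ≠ 0)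
    (hSx : ContDiffOn ℝ (⊤ : ℕ∞) Sx Ω)
    (hSy : ContDiffOn ℝ (⊤ : ℕ∞) Sy Ω)
    (hE1 : ∀ p ∈ Ω, py Sx p + px Sy p = 4 * px q p * py q p)
    (hE2 : ∀ p ∈ Ω, px Sx p = 2 * (px q p) ^ 2)
    (hE3 : ∀ p ∈ Ω, py Sy p = 2 * (py q p) ^ 2) :
    ∃ Cx Cy : ℝ, ∀ p ∈ Ω,
      p.1 * (Sx p - Cx) + p.2 * (Sy p - Cy) = 2 * (q p) ^ 2 ∧
      p.1 * px (fun z => Sx z - Cx) p + p.2 * py (fun z => Sx z - Cx) p = Sx p - Cx ∧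
      p.1 * px (fun z => Sy z - Cy) p + p.2 * py (fun z => Sy z - Cy) p = Sy p - Cy := by
  -- differentiability bookkeeping
  have cqx := contDiffOn_px hΩ hq
  have cqy := contDiffOn_py hΩ hq
  have cSxx := contDiffOn_px hΩ hSx
  have cSxy := contDiffOn_py hΩ hSx
  have cSyx := contDiffOn_px hΩ hSy
  have cSyy := contDiffOn_py hΩ hSy
  have dq : ∀ z ∈ Ω, DifferentiableAt ℝ q z := fun z hz => diffAt_of_contDiffOn hΩ hq hz
  have dqx : ∀ z ∈ Ω, DifferentiableAt ℝ (px q) z := fun z hz => diffAt_of_contDiffOn hΩ cqx hz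
  have dqy : ∀ z ∈ Ω, DifferentiableAt ℝ (py q) z := fun z hz => diffAt_of_contDiffOn hΩ cqy hz
  have dSx : ∀ z ∈ Ω, DifferentiableAt ℝ Sx z := fun z hz => diffAt_of_contDiffOn hΩ hSx hz
  have dSy : ∀ z ∈ Ω, DifferentiableAt ℝ Sy z := fun z hz => diffAt_of_contDiffOn hΩ hSy hz
  have dSxx : ∀ z ∈ Ω, DifferentiableAt ℝ (px Sx) z := fun z hz => diffAt_of_contDiffOn hΩ cSxx hz
  have dSxy : ∀ z ∈ Ω, DifferentiableAt ℝ (py Sx) z := fun z hz => diffAt_of_contDiffOn hΩ cSxy hz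
  have dSyx : ∀ z ∈ Ω, DifferentiableAt ℝ (px Sy) z := fun z hz => diffAt_of_contDiffOn hΩ cSyx hz
  have dSyy : ∀ z ∈ Ω, DifferentiableAt ℝ (py Sy) z := fun z hz => diffAt_of_contDiffOn hΩ cSyy hz
  -- Euler identities
  have eulerq : ∀ p ∈ Ω, p.1 * px q p + p.2 * py q p = q p := by
    have := euler_of_hom hΩ 1 dq (by
      intro p hp τ hτ; rw [pow_one]; exact hhom p hp τ hτ)
    intro p hp
    have h := this p hp
    simpa using h
  have euleru : ∀ p ∈ Ω, p.1 * px (px q) p + p.2 * py (px q) p = 0 := by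
    have := euler_of_hom hΩ 0 dqx (by
      intro p hp τ hτ
      rw [pow_zero, one_mul]
      exact hom_px hΩ dq hhom p hp τ hτ)
    intro p hp
    have h := this p hp
    simpa using h
  have eulerv : ∀ p ∈ Ω, p.1 * px (py q) p + p.2 * py (py q) p = 0 := by
    have := euler_of_hom hΩ 0 dqy (by
      intro p hp τ hτ
      rw [pow_zero, one_mul]
      exact hom_py hΩ dq hhom p hp τ hτ)
    intro p hp
    have h := this p hp
    simpa using h
  have clairq : ∀ p ∈ Ω, px (py q) p = py (px q) p := fun p hp => clairaut hΩ hq hp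
  have clairSx : ∀ p ∈ Ω, px (py Sx) p = py (px Sx) p := fun p hp => clairaut hΩ hSx hp
  have clairSy : ∀ p ∈ Ω, px (py Sy) p = py (px Sy) p := fun p hp => clairaut hΩ hSy hp
  -- second partials of Sx
  have sxx : ∀ p ∈ Ω, px (px Sx) p = 4 * px q p * px (px q) p := by
    intro p hp
    rw [px_congr_on hΩ hE2 hp]
    have h := ((hasDerivAt_px (dqx p hp)).pow 2).const_mul (2 : ℝ)
    have h2 := h.deriv
    rw [show px (fun z => 2 * px q z ^ 2) p = _ from h2]
    push_cast
    ring
  have sxy : ∀ p ∈ Ω, py (px Sx) p = 4 * px q p * py (px q) p := by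
    intro p hp
    rw [py_congr_on hΩ hE2 hp]
    have h := ((hasDerivAt_py (dqx p hp)).pow 2).const_mul (2 : ℝ)
    have h2 := h.deriv
    rw [show py (fun z => 2 * px q z ^ 2) p = _ from h2]
    push_cast
    ring
  -- second partials of Sy from E3
  have syy : ∀ p ∈ Ω, py (py Sy) p = 4 * py q p * py (py q) p := by
    intro p hp
    rw [py_congr_on hΩ hE3 hp]
    have h := ((hasDerivAt_py (dqy p hp)).pow 2).const_mul (2 : ℝ)
    have h2 := h.deriv
    rw [show py (fun z => 2 * py q z ^ 2) p = _ from h2]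
    push_cast
    ring
  have syx : ∀ p ∈ Ω, px (py Sy) p = 4 * py q p * px (py q) p := by
    intro p hp
    rw [px_congr_on hΩ hE3 hp]
    have h := ((hasDerivAt_px (dqy p hp)).pow 2).const_mul (2 : ℝ)
    have h2 := h.deriv
    rw [show px (fun z => 2 * py q z ^ 2) p = _ from h2]
    push_cast
    ring
  -- differentiate E1 in x and y
  have e1x : ∀ p ∈ Ω, px (py Sx) p + px (px Sy) p
      = 4 * (px (px q) p * py q p + px q p * px (py q) p) := by
    intro p hp
    have hL := ((hasDerivAt_px (dSxy p hp)).add (hasDerivAt_px (dSyx p hp))).deriv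
    have hR := (((hasDerivAt_px (dqx p hp)).mul (hasDerivAt_px (dqy p hp))).const_mul (4 : ℝ)).deriv
    have hcg : px (fun z => py Sx z + px Sy z) p = px (fun z => 4 * (px q z * py q z)) p := by
      apply px_congr_on hΩ _ hp
      intro z hz
      rw [hE1 z hz]; ring
    rw [show px (fun z => py Sx z + px Sy z) p = _ from hL] at hcg
    rw [show px (fun z => 4 * (px q z * py q z)) p = _ from hR] at hcg
    rw [hcg]
    all_goals ring
  have e1y : ∀ p ∈ Ω, py (py Sx) p + py (px Sy) p
      = 4 * (py (px q) p * py q p + px q p * py (py q) p) := by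
    intro p hp
    have hL := ((hasDerivAt_py (dSxy p hp)).add (hasDerivAt_py (dSyx p hp))).deriv
    have hR := (((hasDerivAt_py (dqx p hp)).mul (hasDerivAt_py (dqy p hp))).const_mul (4 : ℝ)).deriv
    have hcg : py (fun z => py Sx z + px Sy z) p = py (fun z => 4 * (px q z * py q z)) p := by
      apply py_congr_on hΩ _ hp
      intro z hz
      rw [hE1 z hz]; ring
    rw [show py (fun z => py Sx z + px Sy z) p = _ from hL] at hcg
    rw [show py (fun z => 4 * (px q z * py q z)) p = _ from hR] at hcg
    rw [hcg]
    all_goals ring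
  -- derived second partials
  have syxx : ∀ p ∈ Ω, px (px Sy) p = 4 * px (px q) p * py q p := by
    intro p hp
    have h1 := e1x p hp
    have h2 := clairSx p hp
    have h3 := sxy p hp
    have h4 := clairq p hp
    rw [h2, h3, h4] at h1
    linarith
  have sxyy : ∀ p ∈ Ω, py (py Sx) p = 4 * px q p * py (py q) p := by
    intro p hp
    have h1 := e1y p hp
    have h2 := clairSy p hp
    have h3 := syx p hp
    have h4 := clairq p hp
    rw [← h2, h3, h4] at h1
    linarith
  -- the function G for Sx, and H for Sy
  have hone : ((⊤ : ℕ∞) : WithTop ℕ∞) ≠ 0 := by simp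
  set G : ℝ × ℝ → ℝ := fun z => z.1 * px Sx z + z.2 * py Sx z - Sx z with hGdef
  set H : ℝ × ℝ → ℝ := fun z => z.1 * px Sy z + z.2 * py Sy z - Sy z with hHdef
  have hGdiffOn : DifferentiableOn ℝ G Ω :=
    ((differentiable_fst.differentiableOn.mul (cSxx.differentiableOn hone)).add
      (differentiable_snd.differentiableOn.mul (cSxy.differentiableOn hone))).sub
      (hSx.differentiableOn hone)
  have hHdiffOn : DifferentiableOn ℝ H Ω :=
    ((differentiable_fst.differentiableOn.mul (cSyx.differentiableOn hone)).add
      (differentiable_snd.differentiableOn.mul (cSyy.differentiableOn hone))).sub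
      (hSy.differentiableOn hone)
  have hpxG : ∀ p ∈ Ω, px G p = 0 := by
    intro p hp
    have h1 : HasDerivAt (fun t : ℝ => t * px Sx (t, p.2) + p.2 * py Sx (t, p.2) - Sx (t, p.2))
        (px Sx p + p.1 * px (px Sx) p + p.2 * px (py Sx) p - px Sx p) p.1 := by
      have := (((hasDerivAt_id p.1).mul (hasDerivAt_px (dSxx p hp))).add
        ((hasDerivAt_const p.1 p.2).mul (hasDerivAt_px (dSxy p hp)))).sub
        (hasDerivAt_px (dSx p hp))
      refine this.congr_deriv ?_
      simp
      try ring
    have h2 := h1.deriv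
    rw [show px G p = _ from h2, sxx p hp, clairSx p hp, sxy p hp]
    have h3 := euleru p hp
    linear_combination (4 * px q p) * h3
  have hpyG : ∀ p ∈ Ω, py G p = 0 := by
    intro p hp
    have h1 : HasDerivAt (fun t : ℝ => p.1 * px Sx (p.1, t) + t * py Sx (p.1, t) - Sx (p.1, t))
        (p.1 * py (px Sx) p + (py Sx p + p.2 * py (py Sx) p) - py Sx p) p.2 := by
      have := (((hasDerivAt_const p.2 p.1).mul (hasDerivAt_py (dSxx p hp))).add
        ((hasDerivAt_id p.2).mul (hasDerivAt_py (dSxy p hp)))).sub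
        (hasDerivAt_py (dSx p hp))
      refine this.congr_deriv ?_
      simp
      try ring
    have h2 := h1.deriv
    rw [show py G p = _ from h2, sxy p hp, sxyy p hp]
    have h3 := eulerv p hp
    have h4 := clairq p hp
    linear_combination (4 * px q p) * h3 - (4 * px q p * p.1) * h4
  have hpxH : ∀ p ∈ Ω, px H p = 0 := by
    intro p hp
    have h1 : HasDerivAt (fun t : ℝ => t * px Sy (t, p.2) + p.2 * py Sy (t, p.2) - Sy (t, p.2))
        (px Sy p + p.1 * px (px Sy) p + p.2 * px (py Sy) p - px Sy p) p.1 := by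
      have := (((hasDerivAt_id p.1).mul (hasDerivAt_px (dSyx p hp))).add
        ((hasDerivAt_const p.1 p.2).mul (hasDerivAt_px (dSyy p hp)))).sub
        (hasDerivAt_px (dSy p hp))
      refine this.congr_deriv ?_
      simp
      try ring
    have h2 := h1.deriv
    rw [show px H p = _ from h2, syxx p hp, syx p hp]
    have h3 := euleru p hp
    have h4 := clairq p hp
    linear_combination (4 * py q p) * h3 + (4 * py q p * p.2) * h4
  have hpyH : ∀ p ∈ Ω, py H p = 0 := by
    intro p hp
    have h1 : HasDerivAt (fun t : ℝ => p.1 * px Sy (p.1, t) + t * py Sy (p.1, t) - Sy (p.1, t))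
        (p.1 * py (px Sy) p + (py Sy p + p.2 * py (py Sy) p) - py Sy p) p.2 := by
      have := (((hasDerivAt_const p.2 p.1).mul (hasDerivAt_py (dSyx p hp))).add
        ((hasDerivAt_id p.2).mul (hasDerivAt_py (dSyy p hp)))).sub
        (hasDerivAt_py (dSy p hp))
      refine this.congr_deriv ?_
      simp
      try ring
    have h2 := h1.deriv
    have h5 : py (px Sy) p = 4 * py q p * px (py q) p := by
      rw [← clairSy p hp]; exact syx p hp
    rw [show py H p = _ from h2, h5, syy p hp]
    have h3 := eulerv p hp
    linear_combination (4 * py q p) * h3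
  -- G and H are constant
  have hGzero : ∀ p ∈ Ω, fderiv ℝ G p = 0 := fun p hp =>
    fderiv_eq_zero_of_px_py (hGdiffOn.differentiableAt (hΩ.mem_nhds hp)) (hpxG p hp) (hpyG p hp)
  have hHzero : ∀ p ∈ Ω, fderiv ℝ H p = 0 := fun p hp =>
    fderiv_eq_zero_of_px_py (hHdiffOn.differentiableAt (hΩ.mem_nhds hp)) (hpxH p hp) (hpyH p hp)
  obtain ⟨p₀, hp₀⟩ := hconn.nonempty
  refine ⟨-G p₀, -H p₀, ?_⟩
  have hGconst := const_on hΩ hconn.isPreconnected hGdiffOn hGzero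
  have hHconst := const_on hΩ hconn.isPreconnected hHdiffOn hHzero
  have hGx : ∀ p ∈ Ω, p.1 * px Sx p + p.2 * py Sx p = Sx p - -G p₀ := by
    intro p hp
    have h6 : G p = G p₀ := hGconst p hp p₀ hp₀
    have h7 : G p = p.1 * px Sx p + p.2 * py Sx p - Sx p := rfl
    linarith [h6, h7]
  have hHy : ∀ p ∈ Ω, p.1 * px Sy p + p.2 * py Sy p = Sy p - -H p₀ := by
    intro p hp
    have h6 : H p = H p₀ := hHconst p hp p₀ hp₀
    have h7 : H p = p.1 * px Sy p + p.2 * py Sy p - Sy p := rfl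
    linarith [h6, h7]
  intro p hp
  have h1 := hE1 p hp
  have h2 := hE2 p hp
  have h3 := hE3 p hp
  have heu := eulerq p hp
  have hg := hGx p hp
  have hh := hHy p hp
  refine ⟨?_, ?_, ?_⟩
  · linear_combination (-p.1) * hg + (-p.2) * hh + p.1 ^ 2 * h2 + p.1 * p.2 * h1 + p.2 ^ 2 * h3 +
      2 * (q p + p.1 * px q p + p.2 * py q p) * heu
  · have e1 : px (fun z => Sx z - -G p₀) p = px Sx p :=
      ((hasDerivAt_px (dSx p hp)).sub_const _).deriv
    have e2 : py (fun z => Sx z - -G p₀) p = py Sx p :=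
      ((hasDerivAt_py (dSx p hp)).sub_const _).deriv
    rw [e1, e2]; exact hg
  · have e1 : px (fun z => Sy z - -H p₀) p = px Sy p :=
      ((hasDerivAt_px (dSy p hp)).sub_const _).deriv
    have e2 : py (fun z => Sy z - -H p₀) p = py Sy p :=
      ((hasDerivAt_py (dSy p hp)).sub_const _).deriv
    rw [e1, e2]; exact hh
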